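/- Let f solve the Airy equation f'' (u) = u f(u), fix z ∈ ℂ, z ≠ 0, and set Ψ(x) = f(x+z) - f'(x+z)/(x z) for x ≠ 0. Then (1/x)·P(x,∂ₓ)·P*(x,∂ₓ)·(1/x)·Ψ = z² Ψ, where P f = x f'' - f' - x² f and P* g = (x g)'' + g' - x² g. That is, Ψ₁(x,z) is an eigenfunction of the fourth-order operator (1/x) P P* (1/x) with eigenvalue z². -/

import Mathlib

open scoped ContDiff


/-- The differential operator `P f = x f'' - f' - x² f` (over ℂ). -/
noncomputable def Pop (f : ℂ → ℂ) : ℂ → ℂ :=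
  fun x => x * deriv (deriv f) x - deriv f x - x ^ 2 * f x

/-- The formal adjoint `P* g = (x g)'' + g' - x² g` (over ℂ). -/
noncomputable def Pstar (g : ℂ → ℂ) : ℂ → ℂ :=
  fun x => deriv (deriv (fun y => y * g y)) x + deriv g x - x ^ 2 * g x

section Aux

variable (f : ℂ → ℂ) (z : ℂ)

lemma aux_hA (hf : ContDiff ℂ ⊤ f) :
    ∀ w : ℂ, HasDerivAt (fun u => f (u + z)) (deriv f (w + z)) w := by
  intro w
  have h1 : HasDerivAt (fun u : ℂ => u + z) 1 w := (hasDerivAt_id w).add_const z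
  have h2 : HasDerivAt f (deriv f (w + z)) (w + z) :=
    (hf.differentiable (by simp) (w + z)).hasDerivAt
  simpa [Function.comp_def] using h2.comp w h1

lemma aux_hB (hf : ContDiff ℂ ⊤ f) (hairy : ∀ u, deriv (deriv f) u = u * f u) :
    ∀ w : ℂ, HasDerivAt (fun u => deriv f (u + z)) ((w + z) * f (w + z)) w := by
  intro w
  have hdf : Differentiable ℂ (deriv f) := by
    have h1 : ContDiff ℂ ∞ f := hf.of_le le_top
    exact (contDiff_infty_iff_deriv.mp h1).2.differentiable (by simp)
  have h1 : HasDerivAt (fun u : ℂ => u + z) 1 w := (hasDerivAt_id w).add_const z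
  have h2 : HasDerivAt (deriv f) (deriv (deriv f) (w + z)) (w + z) :=
    (hdf (w + z)).hasDerivAt
  rw [hairy] at h2
  simpa [Function.comp_def] using h2.comp w h1

/-- Key factorization step: `P*` of `Ψ/y` equals `z · f(y+z)` away from `0`. -/
lemma aux_key (hf : ContDiff ℂ ⊤ f) (hairy : ∀ u, deriv (deriv f) u = u * f u)
    (hz : z ≠ 0) :
    ∀ y : ℂ, y ≠ 0 →
      Pstar (fun w => (1 / w) * (f (w + z) - deriv f (w + z) / (w * z))) y
        = z * f (y + z) := by
  intro y hy
  have hA := aux_hA f z hf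
  have hB := aux_hB f z hf hairy
  set A : ℂ → ℂ := fun w => f (w + z) with hAdef
  set B : ℂ → ℂ := fun w => deriv f (w + z) with hBdef
  set h : ℂ → ℂ := fun w => (1 / w) * (A w - B w / (w * z)) with hhdef
  set φ : ℂ → ℂ := fun w => A w - B w / (w * z) with hφdef
  set D1 : ℂ → ℂ := fun w =>
    B w - (((w + z) * A w) * (w * z) - B w * z) / ((w * z) ^ 2) with hD1def
  have hmem : {w : ℂ | w ≠ (0 : ℂ)} ∈ nhds y := isOpen_ne.mem_nhds hy
  -- derivative of φ at any nonzero point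
  have hφ' : ∀ w : ℂ, w ≠ 0 → HasDerivAt φ (D1 w) w := by
    intro w hw
    have hden : HasDerivAt (fun u : ℂ => u * z) z w := by
      simpa using (hasDerivAt_id w).mul_const z
    have hq : HasDerivAt (fun u => B u / (u * z))
        ((((w + z) * A w) * (w * z) - B w * z) / ((w * z) ^ 2)) w := by
      exact (hB w).div hden (mul_ne_zero hw hz)
    exact (hA w).sub hq
  -- w * h w agrees with φ on w ≠ 0
  have hwh : ∀ w : ℂ, w ≠ 0 → w * h w = φ w := by
    intro w hw
    simp only [hhdef, hφdef]
    field_simp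
  -- first derivative of (w * h w) agrees with D1 on w ≠ 0
  have hd1 : ∀ w : ℂ, w ≠ 0 → deriv (fun u => u * h u) w = D1 w := by
    intro w hw
    have hmemw : {u : ℂ | u ≠ (0 : ℂ)} ∈ nhds w := isOpen_ne.mem_nhds hw
    have heq : (fun u => u * h u) =ᶠ[nhds w] φ :=
      Filter.eventually_of_mem hmemw (fun u hu => hwh u hu)
    exact ((hφ' w hw).congr_of_eventuallyEq heq).deriv
  -- second derivative of (w * h w) at y
  have heq1 : deriv (fun u => u * h u) =ᶠ[nhds y] D1 :=
    Filter.eventually_of_mem hmem (fun u hu => hd1 u hu)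
  -- HasDerivAt for D1 at y
  have hden : HasDerivAt (fun u : ℂ => u * z) z y := by
    simpa using (hasDerivAt_id y).mul_const z
  have hN : HasDerivAt (fun u => ((u + z) * A u) * (u * z))
      ((1 * A y + (y + z) * B y) * (y * z) + ((y + z) * A y) * z) y :=
    (((hasDerivAt_id y).add_const z).mul (hA y)).mul hden
  have hNz : HasDerivAt (fun u => B u * z) ((y + z) * A y * z) y :=
    (hB y).mul_const z
  have hNum : HasDerivAt (fun u => ((u + z) * A u) * (u * z) - B u * z)
      (((1 * A y + (y + z) * B y) * (y * z) + ((y + z) * A y) * z)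
        - (y + z) * A y * z) y := hN.sub hNz
  have hDen : HasDerivAt (fun u : ℂ => (u * z) ^ 2) (2 * (y * z) ^ 1 * z) y :=
    hden.pow 2
  have hyz : y * z ≠ 0 := mul_ne_zero hy hz
  have hD1' : HasDerivAt D1
      ((y + z) * A y -
        ((((1 * A y + (y + z) * B y) * (y * z) + ((y + z) * A y) * z)
          - (y + z) * A y * z) * ((y * z) ^ 2)
          - (((y + z) * A y) * (y * z) - B y * z) * (2 * (y * z) ^ 1 * z))
          / (((y * z) ^ 2) ^ 2)) y :=
    (hB y).sub (hNum.div hDen (pow_ne_zero 2 hyz))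
  have hd2 : deriv (deriv (fun u => u * h u)) y =
      (y + z) * A y -
        ((((1 * A y + (y + z) * B y) * (y * z) + ((y + z) * A y) * z)
          - (y + z) * A y * z) * ((y * z) ^ 2)
          - (((y + z) * A y) * (y * z) - B y * z) * (2 * (y * z) ^ 1 * z))
          / (((y * z) ^ 2) ^ 2) := by
    rw [heq1.deriv_eq]
    exact hD1'.deriv
  -- derivative of h at y
  have hheq : h =ᶠ[nhds y] (fun w => φ w / w) :=
    Filter.eventually_of_mem hmem (fun u hu => by
      simp only [hhdef, hφdef]
      rw [one_div_mul_eq_div])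
  have hh' : HasDerivAt (fun w => φ w / w) ((D1 y * y - φ y * 1) / y ^ 2) y :=
    (hφ' y hy).div (hasDerivAt_id y) hy
  have hdh : deriv h y = (D1 y * y - φ y * 1) / y ^ 2 := by
    rw [hheq.deriv_eq]
    exact hh'.deriv
  -- assemble
  show deriv (deriv (fun u => u * h u)) y + deriv h y - y ^ 2 * h y = z * A y
  rw [hd2, hdh]
  simp only [hhdef, hφdef, hD1def]
  field_simp
  ring

end Aux

/-- For `f` a smooth Airy solution and `z ≠ 0`, the level one bispectral function
`Ψ₁(x,z) = f(x+z) - f'(x+z)/(xz)` is an eigenfunction of `(1/x) P P* (1/x)` with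
eigenvalue `z²`. -/
theorem stmt_9 (f : ℂ → ℂ) (hf : ContDiff ℂ ⊤ f)
    (hairy : ∀ u, deriv (deriv f) u = u * f u)
    (z : ℂ) (hz : z ≠ 0) :
    ∀ x : ℂ, x ≠ 0 →
      (1 / x) *
        Pop (Pstar (fun y => (1 / y) * (f (y + z) - deriv f (y + z) / (y * z)))) x
      = z ^ 2 * (f (x + z) - deriv f (x + z) / (x * z)) := by
  intro x hx
  have hA := aux_hA f z hf
  have hB := aux_hB f z hf hairy
  have hkey := aux_key f z hf hairy hz
  set g : ℂ → ℂ := Pstar (fun y => (1 / y) * (f (y + z) - deriv f (y + z) / (y * z)))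
    with hgdef
  have hmem : {w : ℂ | w ≠ (0 : ℂ)} ∈ nhds x := isOpen_ne.mem_nhds hx
  -- deriv g agrees with z * deriv f (· + z) on w ≠ 0
  have hdg : ∀ w : ℂ, w ≠ 0 → deriv g w = z * deriv f (w + z) := by
    intro w hw
    have hmemw : {u : ℂ | u ≠ (0 : ℂ)} ∈ nhds w := isOpen_ne.mem_nhds hw
    have heq : g =ᶠ[nhds w] (fun u => z * f (u + z)) :=
      Filter.eventually_of_mem hmemw (fun u hu => hkey u hu)
    have : HasDerivAt (fun u => z * f (u + z)) (z * deriv f (w + z)) w :=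
      (hA w).const_mul z
    exact (this.congr_of_eventuallyEq heq).deriv
  have hddg : deriv (deriv g) x = z * ((x + z) * f (x + z)) := by
    have heq : deriv g =ᶠ[nhds x] (fun u => z * deriv f (u + z)) :=
      Filter.eventually_of_mem hmem (fun u hu => hdg u hu)
    rw [heq.deriv_eq]
    exact ((hB x).const_mul z).deriv
  have hgx : g x = z * f (x + z) := hkey x hx
  show (1 / x) * (x * deriv (deriv g) x - deriv g x - x ^ 2 * g x)
      = z ^ 2 * (f (x + z) - deriv f (x + z) / (x * z))
  rw [hddg, hdg x hx, hgx]
  field_simp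
  ring
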